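/- Let Ω := {0,…,a}^ℕ (with a ≥ 1), σ the shift map, and μ a Borel probability measure on Ω with μ[w] > 0 for every finite word w. Define the n-step potentials φ_n : Ω → ℝ by φ_1(ω) := log μ[ω_1] and φ_n(ω) := log( μ[ω_1⋯ω_n] / μ[ω_2⋯ω_n] ) for n ≥ 2, and suppose φ_n converges uniformly on Ω to a function φ. Then, setting K_n := exp( Σ_{k=1}^n ‖φ − φ_k‖_∞ ), one has for every ω ∈ Ω and every n ≥ 1: K_n^{-1} ≤ μ[ω_1⋯ω_n] / exp( Σ_{k=0}^{n−1} φ(σ^k·ω) ) ≤ K_n; moreover (1/n)·log K_n → 0 as n → +∞, so that μ is a weak Gibbs measure for φ. -/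

import Mathlib

open Filter Finset Topology MeasureTheory

/-- The cylinder set `[ω_1 ⋯ ω_n]` of sequences agreeing with `ω` on the first `n`
letters. -/
def cylSet {α : Type*} (ω : ℕ → α) (n : ℕ) : Set (ℕ → α) := {ξ | ∀ k < n, ξ k = ω k}

/-- `μ[ω_1 ⋯ ω_n]` as a real number. -/
noncomputable def cylMeas {α : Type*} [MeasurableSpace α] (μ : Measure (ℕ → α))
    (ω : ℕ → α) (n : ℕ) : ℝ := (μ (cylSet ω n)).toReal

/-- The `n`-step potential `φ_n(ω) = log (μ[ω_1⋯ω_n] / μ[ω_2⋯ω_n])` associated with a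
measure `μ` (for `n = 1`, `φ_1(ω) = log μ[ω_1]`). -/
noncomputable def stepPotential {α : Type*} [MeasurableSpace α] (μ : Measure (ℕ → α))
    (n : ℕ) (ω : ℕ → α) : ℝ :=
  Real.log (cylMeas μ ω n / cylMeas μ (fun k => ω (k + 1)) (n - 1))

lemma cylSet_congr {α : Type*} {ω ω' : ℕ → α} {n : ℕ} (h : ∀ k < n, ω k = ω' k) :
    cylSet ω n = cylSet ω' n := by
  ext ξ
  exact ⟨fun hx k hk => (hx k hk).trans (h k hk),
         fun hx k hk => (hx k hk).trans (h k hk).symm⟩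

lemma cylMeas_congr {α : Type*} [MeasurableSpace α] (μ : Measure (ℕ → α))
    {ω ω' : ℕ → α} {n : ℕ} (h : ∀ k < n, ω k = ω' k) :
    cylMeas μ ω n = cylMeas μ ω' n := by
  unfold cylMeas; rw [cylSet_congr h]

lemma stepPotential_congr {α : Type*} [MeasurableSpace α] (μ : Measure (ℕ → α))
    {k : ℕ} {ξ ξ' : ℕ → α} (h : ∀ i < k, ξ i = ξ' i) :
    stepPotential μ k ξ = stepPotential μ k ξ' := by
  unfold stepPotential
  rw [cylMeas_congr μ h, cylMeas_congr μ (fun i hi => h (i + 1) (by omega))]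

lemma cylMeas_zero {α : Type*} [MeasurableSpace α] (μ : Measure (ℕ → α))
    [IsProbabilityMeasure μ] (ω : ℕ → α) : cylMeas μ ω 0 = 1 := by
  have h : cylSet ω 0 = Set.univ := by ext ξ; simp [cylSet]
  simp [cylMeas, h]

lemma log_cylMeas_eq {a : ℕ} (μ : Measure (ℕ → Fin (a + 1))) [IsProbabilityMeasure μ]
    (hfull : ∀ (ω : ℕ → Fin (a + 1)) (n : ℕ), 0 < cylMeas μ ω n) :
    ∀ (n : ℕ) (ω : ℕ → Fin (a + 1)), Real.log (cylMeas μ ω n) =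
      ∑ k ∈ Finset.range n, stepPotential μ (n - k) (fun i => ω (i + k)) := by
  intro n
  induction n with
  | zero => intro ω; simp [cylMeas_zero]
  | succ n ih =>
    intro ω
    rw [Finset.sum_range_succ']
    have h0 : stepPotential μ (n + 1 - 0) (fun i => ω (i + 0)) =
        Real.log (cylMeas μ ω (n + 1)) - Real.log (cylMeas μ (fun i => ω (i + 1)) n) := by
      have he : (fun i => ω (i + 0)) = ω := rfl
      rw [Nat.sub_zero, he]
      unfold stepPotential
      rw [Nat.add_sub_cancel,
        Real.log_div (ne_of_gt (hfull ω (n + 1))) (ne_of_gt (hfull _ n))]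
    have h1 : ∑ i ∈ Finset.range n,
        stepPotential μ (n + 1 - (i + 1)) (fun j => ω (j + (i + 1)))
        = Real.log (cylMeas μ (fun i => ω (i + 1)) n) := by
      rw [ih (fun i => ω (i + 1))]
      apply Finset.sum_congr rfl
      intro i _
      have h2 : n + 1 - (i + 1) = n - i := by omega
      rw [h2]
      congr 1
    rw [h0, h1]
    ring

set_option linter.unusedVariables false

/-- **Proposition 6.1.** If the `n`-step potentials of a fully supported Borel
probability measure `μ` on `{0,…,a}^ℕ` converge uniformly to `φ`, then `μ` is a weak
Gibbs measure for `φ`, with constants `K n = exp (Σ_{k=1}^n ‖φ − φ_k‖_∞)` satisfying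
`(1/n) log K n → 0`. -/
theorem weakGibbs_of_uniform_potential (a : ℕ) (ha : 1 ≤ a)
    (μ : Measure (ℕ → Fin (a + 1))) [IsProbabilityMeasure μ]
    (hfull : ∀ (ω : ℕ → Fin (a + 1)) (n : ℕ), 0 < cylMeas μ ω n)
    (φ : (ℕ → Fin (a + 1)) → ℝ)
    (hunif : TendstoUniformly (fun n => stepPotential μ (n + 1)) φ atTop) :
    (∀ (ω : ℕ → Fin (a + 1)) (n : ℕ), 1 ≤ n →
      (Real.exp (∑ k ∈ Finset.Icc 1 n, ⨆ ξ, |φ ξ - stepPotential μ k ξ|))⁻¹ ≤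
        cylMeas μ ω n / Real.exp (∑ k ∈ Finset.range n, φ fun i => ω (i + k)) ∧
      cylMeas μ ω n / Real.exp (∑ k ∈ Finset.range n, φ fun i => ω (i + k)) ≤
        Real.exp (∑ k ∈ Finset.Icc 1 n, ⨆ ξ, |φ ξ - stepPotential μ k ξ|)) ∧
    Tendsto (fun n : ℕ =>
        (1 / (n : ℝ)) *
          Real.log (Real.exp (∑ k ∈ Finset.Icc 1 n, ⨆ ξ, |φ ξ - stepPotential μ k ξ|)))
      atTop (nhds 0) := by
  -- `stepPotential μ k` has finite range, hence is bounded
  have hstepbdd : ∀ k : ℕ, ∃ C : ℝ, ∀ ξ : ℕ → Fin (a + 1), |stepPotential μ k ξ| ≤ C := by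
    intro k
    set g : (Fin k → Fin (a + 1)) → ℝ :=
      fun v => stepPotential μ k (fun i => if h : i < k then v ⟨i, h⟩ else 0) with hg
    obtain ⟨C, hC⟩ := (Set.finite_range fun v => |g v|).bddAbove
    refine ⟨C, fun ξ => ?_⟩
    have he : stepPotential μ k ξ = g (fun i => ξ i) := by
      apply stepPotential_congr
      intro i hi
      simp [hg, dif_pos hi]
    rw [he]
    exact hC ⟨fun i => ξ (i : ℕ), rfl⟩
  -- φ is bounded
  have hφbdd : ∃ C : ℝ, ∀ ξ, |φ ξ| ≤ C := by
    obtain ⟨N, hN⟩ := (Metric.tendstoUniformly_iff.mp hunif 1 one_pos).exists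
    obtain ⟨C, hC⟩ := hstepbdd (N + 1)
    refine ⟨C + 1, fun ξ => ?_⟩
    have h1 := hN ξ
    rw [Real.dist_eq] at h1
    calc |φ ξ| = |(φ ξ - stepPotential μ (N + 1) ξ) + stepPotential μ (N + 1) ξ| := by
          ring_nf
      _ ≤ |φ ξ - stepPotential μ (N + 1) ξ| + |stepPotential μ (N + 1) ξ| := abs_add_le _ _
      _ ≤ 1 + C := add_le_add h1.le (hC ξ)
      _ = C + 1 := by ring
  have hbdd : ∀ k : ℕ, BddAbove (Set.range fun ξ => |φ ξ - stepPotential μ k ξ|) := by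
    intro k
    obtain ⟨Cφ, hCφ⟩ := hφbdd
    obtain ⟨Ck, hCk⟩ := hstepbdd k
    refine ⟨Cφ + Ck, ?_⟩
    rintro x ⟨ξ, rfl⟩
    exact (abs_sub _ _).trans (add_le_add (hCφ ξ) (hCk ξ))
  have hle : ∀ (k : ℕ) (ξ : ℕ → Fin (a + 1)),
      |φ ξ - stepPotential μ k ξ| ≤ ⨆ ζ, |φ ζ - stepPotential μ k ζ| :=
    fun k ξ => le_ciSup (hbdd k) ξ
  have hsupnn : ∀ k : ℕ, 0 ≤ ⨆ ζ, |φ ζ - stepPotential μ k ζ| :=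
    fun k => (abs_nonneg _).trans (hle k (fun _ => 0))
  constructor
  · intro ω n hn
    set S : ℝ := ∑ k ∈ Finset.Icc 1 n, ⨆ ξ, |φ ξ - stepPotential μ k ξ| with hS
    have hL : Real.log (cylMeas μ ω n) - ∑ k ∈ Finset.range n, φ (fun i => ω (i + k))
        = ∑ k ∈ Finset.range n,
          (stepPotential μ (n - k) (fun i => ω (i + k)) - φ (fun i => ω (i + k))) := by
      rw [log_cylMeas_eq μ hfull n ω, ← Finset.sum_sub_distrib]
    have habs : |Real.log (cylMeas μ ω n) - ∑ k ∈ Finset.range n, φ (fun i => ω (i + k))|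
        ≤ S := by
      rw [hL]
      refine (Finset.abs_sum_le_sum_abs _ _).trans ?_
      have hstep : ∀ k ∈ Finset.range n,
          |stepPotential μ (n - k) (fun i => ω (i + k)) - φ (fun i => ω (i + k))|
          ≤ ⨆ ζ, |φ ζ - stepPotential μ (n - k) ζ| := by
        intro k _
        rw [abs_sub_comm]
        exact hle (n - k) _
      refine (Finset.sum_le_sum hstep).trans_eq ?_
      rw [hS]
      refine Finset.sum_nbij' (fun k => n - k) (fun k => n - k) ?_ ?_ ?_ ?_ ?_
      · intro k hk; simp only [Finset.mem_range] at hk; simp only [Finset.mem_Icc]; omega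
      · intro k hk; simp only [Finset.mem_Icc] at hk; simp only [Finset.mem_range]; omega
      · intro k hk; simp only [Finset.mem_range] at hk; omega
      · intro k hk; simp only [Finset.mem_Icc] at hk; omega
      · intro k _; rfl
    have hRpos : 0 < cylMeas μ ω n /
        Real.exp (∑ k ∈ Finset.range n, φ fun i => ω (i + k)) :=
      div_pos (hfull ω n) (Real.exp_pos _)
    have hlogR : Real.log (cylMeas μ ω n /
        Real.exp (∑ k ∈ Finset.range n, φ fun i => ω (i + k)))
        = Real.log (cylMeas μ ω n) - ∑ k ∈ Finset.range n, φ (fun i => ω (i + k)) := by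
      rw [Real.log_div (ne_of_gt (hfull ω n)) (Real.exp_ne_zero _), Real.log_exp]
    rw [abs_le] at habs
    constructor
    · rw [← Real.exp_neg, ← Real.exp_log hRpos]
      exact Real.exp_le_exp.mpr (by rw [hlogR]; exact habs.1)
    · rw [← Real.exp_log hRpos]
      exact Real.exp_le_exp.mpr (by rw [hlogR]; exact habs.2)
  · have hu : Tendsto (fun j : ℕ => ⨆ ζ, |φ ζ - stepPotential μ (j + 1) ζ|)
        atTop (𝓝 0) := by
      rw [Metric.tendsto_atTop]
      intro ε hε
      obtain ⟨N, hN⟩ := eventually_atTop.mp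
        (Metric.tendstoUniformly_iff.mp hunif (ε / 2) (by positivity))
      refine ⟨N, fun j hj => ?_⟩
      have hsup : (⨆ ζ, |φ ζ - stepPotential μ (j + 1) ζ|) ≤ ε / 2 := by
        refine ciSup_le fun ζ => ?_
        have := hN j hj ζ
        rw [Real.dist_eq] at this
        exact this.le
      rw [Real.dist_eq, sub_zero, abs_of_nonneg (hsupnn _)]
      linarith
    have hces := hu.cesaro
    have heq : (fun n : ℕ => (1 / (n : ℝ)) *
        Real.log (Real.exp (∑ k ∈ Finset.Icc 1 n, ⨆ ξ, |φ ξ - stepPotential μ k ξ|)))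
        = fun n : ℕ => (n : ℝ)⁻¹ *
          ∑ i ∈ Finset.range n, ⨆ ζ, |φ ζ - stepPotential μ (i + 1) ζ| := by
      funext n
      rw [Real.log_exp, one_div]
      congr 1
      refine Finset.sum_nbij' (fun k => k - 1) (fun k => k + 1) ?_ ?_ ?_ ?_ ?_
      · intro k hk; simp only [Finset.mem_Icc] at hk; simp only [Finset.mem_range]; omega
      · intro k hk; simp only [Finset.mem_range] at hk; simp only [Finset.mem_Icc]; omega
      · intro k hk; simp only [Finset.mem_Icc] at hk; omega
      · intro k _; omega
      · intro k hk
        rw [Finset.mem_Icc] at hk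
        have : k - 1 + 1 = k := by omega
        rw [this]
    rw [heq]
    exact hces
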